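/- Let N be a self-adjoint continuous linear operator on a complex Hilbert space H with ‖N‖ ≤ 1, and let E be the orthogonal projection onto the closed subspace ker(I − N²). Then for every x ∈ H the even powers N^{2k} x converge in norm to E x as k → ∞, and the sequence of norms ‖N^{2k} x‖ is monotonically nonincreasing with limit ‖E x‖. -/

import Mathlib

open Filter ContinuousLinearMap

/-- Let `N` be self-adjoint with `‖N‖ ≤ 1` on a complex Hilbert space,
and let `E` be the orthogonal projection onto `ker (I − N²)` (characterized as the
self-adjoint idempotent with range `ker (I − N∘N)`). Then for every `x`, `N^(2k) x → E x`
in norm, and the norms `‖N^(2k) x‖` are monotonically nonincreasing with limit `‖E x‖`. -/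
theorem stmt9 {H : Type*} [NormedAddCommGroup H] [InnerProductSpace ℂ H] [CompleteSpace H]
    (N : H →L[ℂ] H) (hN : IsSelfAdjoint N) (hNnorm : ‖N‖ ≤ 1)
    (E : H →L[ℂ] H) (hE : IsSelfAdjoint E) (hE2 : E ∘L E = E)
    (hErange : LinearMap.range (E : H →ₗ[ℂ] H) = LinearMap.ker (((1 : H →L[ℂ] H) - N ∘L N : H →L[ℂ] H) : H →ₗ[ℂ] H)) :
    ∀ x : H,
      Tendsto (fun k : ℕ => (N ^ (2 * k)) x) atTop (nhds (E x)) ∧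
      Antitone (fun k : ℕ => ‖(N ^ (2 * k)) x‖) ∧
      Tendsto (fun k : ℕ => ‖(N ^ (2 * k)) x‖) atTop (nhds ‖E x‖) := by
  intro x
  set T : H →L[ℂ] H := N ^ 2 with hTdef
  have hTNN : T = N ∘L N := by rw [hTdef, sq]; rfl
  have hT : IsSelfAdjoint T := hN.pow 2
  have hpow : ∀ k : ℕ, (N ^ (2 * k)) x = (T ^ k) x := by
    intro k; rw [hTdef, ← pow_mul]
  -- b k = ‖N^k x‖, antitone, nonnegative
  set b : ℕ → ℝ := fun k => ‖(N ^ k) x‖ with hb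
  have hbanti : Antitone b := by
    apply antitone_nat_of_succ_le
    intro k
    have h1 : (N ^ (k + 1)) x = N ((N ^ k) x) := by rw [pow_succ']; rfl
    simp only [hb, h1]
    calc ‖N ((N ^ k) x)‖ ≤ ‖N‖ * ‖(N ^ k) x‖ := N.le_opNorm _
      _ ≤ 1 * ‖(N ^ k) x‖ := by gcongr
      _ = ‖(N ^ k) x‖ := one_mul _
  have hbnonneg : ∀ k, 0 ≤ b k := fun k => norm_nonneg _
  obtain ⟨L, hL⟩ : ∃ L, Tendsto b atTop (nhds L) := by
    refine ⟨⨅ k, b k, tendsto_atTop_ciInf hbanti ⟨0, ?_⟩⟩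
    rintro r ⟨k, rfl⟩; exact hbnonneg k
  have hLle : ∀ k, L ≤ b k := fun k =>
    le_of_tendsto hL (eventually_atTop.2 ⟨k, fun m hm => hbanti hm⟩)
  have hLnonneg : 0 ≤ L := ge_of_tendsto' hL hbnonneg
  -- key inner product identity
  have hinner : ∀ m n : ℕ, (inner ℂ ((T ^ m) x) ((T ^ n) x) : ℂ) = ((b (m + n) ^ 2 : ℝ) : ℂ) := by
    intro m n
    have h1 : ContinuousLinearMap.adjoint (T ^ m) = T ^ m := isSelfAdjoint_iff'.mp (hT.pow m)
    have step : (inner ℂ ((T ^ m) x) ((T ^ n) x) : ℂ) = inner ℂ x ((T ^ (m + n)) x) := by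
      rw [← h1, adjoint_inner_left, ← ContinuousLinearMap.comp_apply, ← mul_def, ← pow_add]
    rw [step]
    have h2 : T ^ (m + n) = (N ^ (m + n)) ∘L (N ^ (m + n)) := by
      rw [hTdef, ← pow_mul, ← mul_def, ← pow_add, two_mul]
    have h3 : ContinuousLinearMap.adjoint (N ^ (m + n)) = N ^ (m + n) :=
      isSelfAdjoint_iff'.mp (hN.pow _)
    rw [h2, ContinuousLinearMap.comp_apply, ← adjoint_inner_left, h3,
      inner_self_eq_norm_sq_to_K]
    norm_cast
  set u : ℕ → H := fun k => (T ^ k) x with hu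
  have hre : ∀ m n : ℕ, RCLike.re (inner ℂ (u m) (u n) : ℂ) = b (m + n) ^ 2 := by
    intro m n
    rw [hu]; simp only [hinner m n]; simp [← Complex.ofReal_pow]
  have hnorm2 : ∀ m, ‖u m‖ ^ 2 = b (2 * m) ^ 2 := by
    intro m
    rw [← inner_self_eq_norm_sq (𝕜 := ℂ), hre, two_mul]
  have hdist : ∀ m n, ‖u m - u n‖ ^ 2 = b (2 * m) ^ 2 + b (2 * n) ^ 2 - 2 * b (m + n) ^ 2 := by
    intro m n
    rw [@norm_sub_sq ℂ, hre, hnorm2, hnorm2]; ring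
  have hLsq : Tendsto (fun k => b k ^ 2) atTop (nhds (L ^ 2)) := hL.pow 2
  have key : ∀ k m n, k ≤ m → m ≤ n → ‖u m - u n‖ ^ 2 ≤ b (2 * k) ^ 2 - L ^ 2 := by
    intro k m n hkm hmn
    rw [hdist]
    have h1 : b (2 * n) ≤ b (m + n) := hbanti (by omega)
    have h1' : b (2 * n) ^ 2 ≤ b (m + n) ^ 2 := pow_le_pow_left₀ (hbnonneg _) h1 2
    have h2 : b (2 * m) ^ 2 ≤ b (2 * k) ^ 2 :=
      pow_le_pow_left₀ (hbnonneg _) (hbanti (by omega)) 2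
    have h3 : L ^ 2 ≤ b (2 * n) ^ 2 := pow_le_pow_left₀ hLnonneg (hLle _) 2
    nlinarith
  have hcauchy : CauchySeq u := by
    apply cauchySeq_of_le_tendsto_0 (fun k => Real.sqrt (b (2 * k) ^ 2 - L ^ 2))
    · intro m n k hkm hkn
      rw [dist_eq_norm]
      have bound : ‖u m - u n‖ ^ 2 ≤ b (2 * k) ^ 2 - L ^ 2 := by
        rcases le_total m n with h | h
        · exact key k m n hkm h
        · rw [norm_sub_rev]; exact key k n m hkn h
      calc ‖u m - u n‖ = Real.sqrt (‖u m - u n‖ ^ 2) := by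
            rw [Real.sqrt_sq (norm_nonneg _)]
        _ ≤ Real.sqrt (b (2 * k) ^ 2 - L ^ 2) := Real.sqrt_le_sqrt bound
    · have h2k : Tendsto (fun k : ℕ => 2 * k) atTop atTop :=
        tendsto_atTop_atTop_of_monotone (fun a b h => by omega) (fun c => ⟨c, by omega⟩)
      have : Tendsto (fun k : ℕ => b (2 * k) ^ 2 - L ^ 2) atTop (nhds (L ^ 2 - L ^ 2)) :=
        (hLsq.comp h2k).sub tendsto_const_nhds
      rw [sub_self] at this
      have := this.sqrt
      rwa [Real.sqrt_zero] at this
  obtain ⟨y, hy⟩ := cauchySeq_tendsto_of_complete hcauchy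
  -- T y = y
  have hTy : T y = y := by
    have h1 : Tendsto (fun k => T (u k)) atTop (nhds (T y)) := (T.continuous.tendsto y).comp hy
    have h2 : (fun k => T (u k)) = fun k => u (k + 1) := by
      funext k; rw [hu]; simp only [pow_succ']; rfl
    rw [h2] at h1
    have h3 : Tendsto (fun k => u (k + 1)) atTop (nhds y) := hy.comp (tendsto_add_atTop_nat 1)
    exact tendsto_nhds_unique h1 h3
  -- y ∈ range E, so E y = y
  have hymem : y ∈ LinearMap.range (E : H →ₗ[ℂ] H) := by
    rw [hErange, LinearMap.mem_ker]
    simp [← hTNN, hTy]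
  have hEy : E y = y := by
    obtain ⟨z, rfl⟩ := hymem
    have := congrArg (fun f : H →L[ℂ] H => f z) hE2
    simpa using this
  -- E ∘ T = E
  have hTE : T ∘L E = E := by
    ext z
    have hz : E z ∈ LinearMap.range (E : H →ₗ[ℂ] H) := ⟨z, rfl⟩
    rw [hErange, LinearMap.mem_ker] at hz
    simp only [ContinuousLinearMap.coe_coe, ContinuousLinearMap.sub_apply, ContinuousLinearMap.one_apply, ← hTNN] at hz
    simp only [ContinuousLinearMap.comp_apply]
    linear_combination (norm := module) -hz
  have hET : E ∘L T = E := by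
    have h1 : star (T * E) = star E := by rw [← mul_def] at hTE; rw [hTE]
    rw [star_mul, hE.star_eq, hT.star_eq] at h1
    rw [mul_def] at h1; exact h1
  -- E (u k) = E x
  have hETm : E * T = E := hET
  have hEuT : ∀ k : ℕ, E * T ^ k = E := by
    intro k
    induction k with
    | zero => simp
    | succ n ih => rw [pow_succ, ← mul_assoc, ih, hETm]
  have hEu : ∀ k, E (u k) = E x := by
    intro k
    have := congrArg (fun f : H →L[ℂ] H => f x) (hEuT k)
    simpa [hu, mul_def] using this
  -- y = E x
  have hyEx : y = E x := by
    have h1 : Tendsto (fun k => E (u k)) atTop (nhds (E y)) := (E.continuous.tendsto y).comp hy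
    simp only [hEu] at h1
    have h2 : E y = E x := tendsto_nhds_unique h1 tendsto_const_nhds
    rw [← hEy, h2]
  refine ⟨?_, ?_, ?_⟩
  · simp only [hpow]
    rw [← hyEx]; exact hy
  · intro i j hij
    exact hbanti (by omega : 2 * i ≤ 2 * j)
  · simp only [hpow]
    have := (continuous_norm.tendsto y).comp hy
    rw [hyEx] at this
    exact this
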